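/- Let J be an n_L×N real matrix with full row rank (rank J = n_L), let Q be an N×n_L real matrix whose column space equals the column space of Jᵀ, and let R be a P×N real matrix satisfying RᵀR = c·I for some c > 0. Then JQ is invertible and (1/c)·R Q (JQ)⁻¹ is the Moore–Penrose pseudoinverse of the matrix J Rᵀ. Consequently, for every output error δ ∈ ℝ^{n_L}, the concatenated steady-state DFC weight update R Q (JQ)⁻¹ δ equals c times the Gauss–Newton update (J Rᵀ)† δ. (Theorem 1: under Conditions 1 and 2, DFC steady-state weight updates align with Gauss–Newton updates for a minibatch size of 1.) -/
import Mathlib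


open Matrix

/-- `S` is the Moore–Penrose pseudoinverse of `A`: the four Penrose equations. -/
def IsMoorePenrose {m n : Type*} [Fintype m] [Fintype n]
    (A : Matrix m n ℝ) (S : Matrix n m ℝ) : Prop :=
  A * S * A = A ∧ S * A * S = S ∧ (A * S)ᵀ = A * S ∧ (S * A)ᵀ = S * A

/-- A square real matrix of full rank is a unit. -/
lemma isUnit_of_rank_eq_card {n : ℕ} (A : Matrix (Fin n) (Fin n) ℝ) (h : A.rank = n) :
    IsUnit A := by
  rw [← Matrix.mulVec_surjective_iff_isUnit]
  have htop : LinearMap.range A.mulVecLin = ⊤ := by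
    apply Submodule.eq_top_of_finrank_eq
    rw [show Module.finrank ℝ ↥(LinearMap.range A.mulVecLin) = A.rank from rfl, h]
    simp
  intro y
  have : y ∈ LinearMap.range A.mulVecLin := htop ▸ Submodule.mem_top
  obtain ⟨x, hx⟩ := this
  exact ⟨x, hx⟩

/-- Uniqueness of the Moore–Penrose pseudoinverse. -/
lemma isMoorePenrose_unique {m n : Type*} [Fintype m] [Fintype n]
    (A : Matrix m n ℝ) (S T : Matrix n m ℝ)
    (hS : IsMoorePenrose A S) (hT : IsMoorePenrose A T) : S = T := by
  obtain ⟨hS1, hS2, hS3, hS4⟩ := hS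
  obtain ⟨hT1, hT2, hT3, hT4⟩ := hT
  have hA1 : Aᵀ = Aᵀ * (A * S) := by
    conv_lhs => rw [← hS1]
    rw [transpose_mul, hS3]
  have hA2 : Aᵀ = (S * A) * Aᵀ := by
    conv_lhs => rw [← hS1]
    rw [transpose_mul, transpose_mul, ← Matrix.mul_assoc, ← transpose_mul, hS4]
  have hAT : A * T = A * S := by
    calc A * T = (A * T)ᵀ := hT3.symm
      _ = Tᵀ * Aᵀ := transpose_mul _ _
      _ = Tᵀ * (Aᵀ * (A * S)) := by rw [← hA1]
      _ = (Tᵀ * Aᵀ) * (A * S) := by rw [Matrix.mul_assoc]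
      _ = (A * T)ᵀ * (A * S) := by rw [transpose_mul]
      _ = (A * T) * (A * S) := by rw [hT3]
      _ = ((A * T) * A) * S := by simp only [Matrix.mul_assoc]
      _ = A * S := by rw [hT1]
  have hTA : T * A = S * A := by
    calc T * A = (T * A)ᵀ := hT4.symm
      _ = Aᵀ * Tᵀ := transpose_mul _ _
      _ = ((S * A) * Aᵀ) * Tᵀ := by rw [← hA2]
      _ = (S * A) * (Aᵀ * Tᵀ) := by rw [Matrix.mul_assoc]
      _ = (S * A) * (T * A)ᵀ := by rw [transpose_mul]
      _ = (S * A) * (T * A) := by rw [hT4]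
      _ = S * ((A * T) * A) := by simp only [Matrix.mul_assoc]
      _ = S * A := by rw [hT1]
  calc S = S * A * S := hS2.symm
    _ = T * A * S := by rw [hTA]
    _ = T * (A * S) := by rw [Matrix.mul_assoc]
    _ = T * (A * T) := by rw [hAT]
    _ = T * A * T := by rw [Matrix.mul_assoc]
    _ = T := hT2

/-- Theorem 1: under Condition 1 (`RᵀR = c I`, equal layer activation norms)
and Condition 2 (column space of `Q` equals column space of `Jᵀ`), with `J`
of full row rank, `JQ` is invertible, `(1/c) R Q (JQ)⁻¹` is the Moore–Penrose
pseudoinverse of `J Rᵀ`, and hence the concatenated steady-state DFC weight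
update `R Q (JQ)⁻¹ δ` equals `c` times the Gauss–Newton update `(J Rᵀ)† δ`. -/
theorem dfc_approximates_gauss_newton {nL N P : ℕ}
    (J : Matrix (Fin nL) (Fin N) ℝ) (Q : Matrix (Fin N) (Fin nL) ℝ)
    (R : Matrix (Fin P) (Fin N) ℝ) (c : ℝ) (hc : 0 < c)
    (hrank : J.rank = nL)
    (hQ : LinearMap.range Q.mulVecLin = LinearMap.range Jᵀ.mulVecLin)
    (hR : Rᵀ * R = c • (1 : Matrix (Fin N) (Fin N) ℝ)) :
    IsUnit (J * Q) ∧
      IsMoorePenrose (J * Rᵀ) (c⁻¹ • (R * Q * (J * Q)⁻¹)) ∧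
      ∀ S : Matrix (Fin P) (Fin nL) ℝ, IsMoorePenrose (J * Rᵀ) S →
        ∀ δ : Fin nL → ℝ, (R * Q * (J * Q)⁻¹) *ᵥ δ = c • (S *ᵥ δ) := by
  -- `J Jᵀ` is invertible
  have hJJ : IsUnit (J * Jᵀ) := by
    apply isUnit_of_rank_eq_card
    rw [Matrix.rank_self_mul_transpose, hrank]
  -- `J Q` is invertible (it is surjective)
  have hJQ : IsUnit (J * Q) := by
    rw [← Matrix.mulVec_surjective_iff_isUnit]
    have htop : LinearMap.range (J * Q).mulVecLin = ⊤ := by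
      rw [Matrix.mulVecLin_mul, LinearMap.range_comp, hQ, ← LinearMap.range_comp,
        ← Matrix.mulVecLin_mul, LinearMap.range_eq_top]
      exact Matrix.mulVec_surjective_iff_isUnit.2 hJJ
    intro y
    have : y ∈ LinearMap.range (J * Q).mulVecLin := htop ▸ Submodule.mem_top
    obtain ⟨x, hx⟩ := this
    exact ⟨x, hx⟩
  -- factor `Q = Jᵀ M`
  set M : Matrix (Fin nL) (Fin nL) ℝ := (J * Jᵀ)⁻¹ * (J * Q) with hMdef
  have hJJdet : IsUnit (J * Jᵀ).det := (Matrix.isUnit_iff_isUnit_det _).1 hJJ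
  have hJQdet : IsUnit (J * Q).det := (Matrix.isUnit_iff_isUnit_det _).1 hJQ
  have hM : Q = Jᵀ * M := by
    apply Matrix.toLin'.injective
    apply LinearMap.ext
    intro x
    simp only [Matrix.toLin'_apply]
    have hx : Q *ᵥ x ∈ LinearMap.range Jᵀ.mulVecLin := by
      rw [← hQ]; exact ⟨x, rfl⟩
    obtain ⟨y, hy⟩ := hx
    have hy : Jᵀ *ᵥ y = Q *ᵥ x := hy
    rw [hMdef]
    symm
    calc (Jᵀ * ((J * Jᵀ)⁻¹ * (J * Q))) *ᵥ x
        = Jᵀ *ᵥ ((J * Jᵀ)⁻¹ *ᵥ (J *ᵥ (Q *ᵥ x))) := by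
          simp only [Matrix.mulVec_mulVec, Matrix.mul_assoc]
      _ = Jᵀ *ᵥ ((J * Jᵀ)⁻¹ *ᵥ (J *ᵥ (Jᵀ *ᵥ y))) := by rw [hy]
      _ = (Jᵀ * ((J * Jᵀ)⁻¹ * (J * Jᵀ))) *ᵥ y := by
          simp only [Matrix.mulVec_mulVec, Matrix.mul_assoc]
      _ = Jᵀ *ᵥ y := by rw [Matrix.nonsing_inv_mul _ hJJdet, Matrix.mul_one]
      _ = Q *ᵥ x := hy
  have hJQfact : J * Q = (J * Jᵀ) * M := by
    rw [hM, ← Matrix.mul_assoc]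
  have hMunit : IsUnit M := by
    rw [hMdef]
    exact (Matrix.isUnit_nonsing_inv_iff.2 hJJ).mul hJQ
  have hMdet : IsUnit M.det := (Matrix.isUnit_iff_isUnit_det _).1 hMunit
  -- the key projection identity
  have hproj : Q * (J * Q)⁻¹ * J = Jᵀ * (J * Jᵀ)⁻¹ * J := by
    rw [hJQfact, Matrix.mul_inv_rev, hM]
    calc Jᵀ * M * (M⁻¹ * (J * Jᵀ)⁻¹) * J
        = Jᵀ * (M * M⁻¹) * (J * Jᵀ)⁻¹ * J := by
          simp only [Matrix.mul_assoc]
      _ = Jᵀ * (J * Jᵀ)⁻¹ * J := by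
          rw [Matrix.mul_nonsing_inv _ hMdet, Matrix.mul_one]
  have hPsymm : (Jᵀ * (J * Jᵀ)⁻¹ * J)ᵀ = Jᵀ * (J * Jᵀ)⁻¹ * J := by
    rw [transpose_mul, transpose_mul, transpose_transpose,
      Matrix.transpose_nonsing_inv, transpose_mul, transpose_transpose,
      Matrix.mul_assoc]
  -- `(J Rᵀ) S₀ = 1`
  have hAS : (J * Rᵀ) * (c⁻¹ • (R * Q * (J * Q)⁻¹)) = 1 := by
    rw [Matrix.mul_smul]
    have : (J * Rᵀ) * (R * Q * (J * Q)⁻¹) = c • (1 : Matrix (Fin nL) (Fin nL) ℝ) := by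
      calc (J * Rᵀ) * (R * Q * (J * Q)⁻¹)
          = J * (Rᵀ * R) * (Q * (J * Q)⁻¹) := by simp only [Matrix.mul_assoc]
        _ = J * (c • (1 : Matrix (Fin N) (Fin N) ℝ)) * (Q * (J * Q)⁻¹) := by rw [hR]
        _ = c • (J * Q * (J * Q)⁻¹) := by
            rw [Matrix.mul_smul, Matrix.mul_one, Matrix.smul_mul, Matrix.mul_assoc]
        _ = c • (1 : Matrix (Fin nL) (Fin nL) ℝ) := by
            rw [Matrix.mul_nonsing_inv _ hJQdet]
    rw [this, smul_smul, inv_mul_cancel₀ hc.ne', one_smul]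
  -- symmetry of `S₀ (J Rᵀ)`
  have hSA : (c⁻¹ • (R * Q * (J * Q)⁻¹)) * (J * Rᵀ)
      = c⁻¹ • (R * (Jᵀ * (J * Jᵀ)⁻¹ * J) * Rᵀ) := by
    rw [Matrix.smul_mul]
    congr 1
    calc R * Q * (J * Q)⁻¹ * (J * Rᵀ)
        = R * (Q * (J * Q)⁻¹ * J) * Rᵀ := by simp only [Matrix.mul_assoc]
      _ = R * (Jᵀ * (J * Jᵀ)⁻¹ * J) * Rᵀ := by rw [hproj]
  have hMP : IsMoorePenrose (J * Rᵀ) (c⁻¹ • (R * Q * (J * Q)⁻¹)) := by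
    refine ⟨?_, ?_, ?_, ?_⟩
    · rw [hAS, Matrix.one_mul]
    · rw [Matrix.mul_assoc, hAS, Matrix.mul_one]
    · rw [hAS, transpose_one]
    · rw [hSA, Matrix.transpose_smul]
      congr 1
      rw [transpose_mul, transpose_mul, transpose_transpose, hPsymm]
      simp only [Matrix.mul_assoc]
  refine ⟨hJQ, hMP, ?_⟩
  intro S hS δ
  have hSeq : S = c⁻¹ • (R * Q * (J * Q)⁻¹) :=
    isMoorePenrose_unique (J * Rᵀ) S (c⁻¹ • (R * Q * (J * Q)⁻¹)) hS hMP
  rw [hSeq]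
  rw [Matrix.smul_mulVec, smul_smul, mul_inv_cancel₀ hc.ne', one_smul]
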